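/- For every formula A, the sequent □(□(A → □A) → A) ⇒ A is provable in the cut-free non-well-founded calculus Grz∞. -/

import Mathlib

/-- Modal formulas of the Grzegorczyk logic: ⊥, atoms, →, □. -/
inductive Formula : Type
  | bot : Formula
  | atom : ℕ → Formula
  | imp : Formula → Formula → Formula
  | box : Formula → Formula
deriving DecidableEq

/-- A sequent Γ ⇒ Δ is a pair of finite multisets of formulas. -/
abbrev Sequent : Type := Multiset Formula × Multiset Formula

/-- Names of the inference rules of Grz∞ + cut (including the two kinds of initial sequents). -/
inductive Rule : Type
  | ax | axBot | impL | impR | refl | box | cut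
deriving DecidableEq

/-- □Π for a multiset Π. -/
def boxed (P : Multiset Formula) : Multiset Formula := P.map Formula.box

/-- `Inst r s p₁ p₂` : the rule `r` has a (correct) instance with conclusion `s`,
first premise `p₁` and second premise `p₂` (`none` = no such premise). -/
inductive Inst : Rule → Sequent → Option Sequent → Option Sequent → Prop
  | ax (Γ Δ : Multiset Formula) (p : ℕ) :
      Inst .ax (Formula.atom p ::ₘ Γ, Formula.atom p ::ₘ Δ) none none
  | axBot (Γ Δ : Multiset Formula) :
      Inst .axBot (Formula.bot ::ₘ Γ, Δ) none none
  | impL (Γ Δ : Multiset Formula) (A B : Formula) :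
      Inst .impL (Formula.imp A B ::ₘ Γ, Δ) (some (B ::ₘ Γ, Δ)) (some (Γ, A ::ₘ Δ))
  | impR (Γ Δ : Multiset Formula) (A B : Formula) :
      Inst .impR (Γ, Formula.imp A B ::ₘ Δ) (some (A ::ₘ Γ, B ::ₘ Δ)) none
  | refl (Γ Δ : Multiset Formula) (A : Formula) :
      Inst .refl (Formula.box A ::ₘ Γ, Δ) (some (A ::ₘ Formula.box A ::ₘ Γ, Δ)) none
  | box (Γ Δ : Multiset Formula) (A : Formula) (P : Multiset Formula) :
      Inst .box (Γ + boxed P, Formula.box A ::ₘ Δ) (some (Γ + boxed P, A ::ₘ Δ))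
        (some (boxed P, {A}))
  | cut (Γ Δ : Multiset Formula) (A : Formula) :
      Inst .cut (Γ, Δ) (some (Γ, A ::ₘ Δ)) (some (A ::ₘ Γ, Δ))

/-- A labelling of tree addresses (lists of booleans; `true` = second/right child)
by a rule name together with a sequent; `none` means the address is outside the tree. -/
abbrev Lab : Type := List Bool → Option (Rule × Sequent)

/-- The labelling of the subtree at child `i`. -/
def shift (i : Bool) (l : Lab) : Lab := fun a => l (i :: a)

/-- An ∞-proof in Grz∞ + cut: a possibly infinite tree of sequents built according to
the rules, in which every infinite branch passes through the right premise of the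
rule (□) infinitely many times. -/
structure InfProof : Type where
  lab : Lab
  root_some : (lab []).isSome
  nojunk : ∀ (a : List Bool) (i : Bool), lab a = none → lab (a ++ [i]) = none
  step : ∀ (a : List Bool) (r : Rule) (s : Sequent), lab a = some (r, s) →
      Inst r s ((lab (a ++ [false])).map Prod.snd) ((lab (a ++ [true])).map Prod.snd)
  branch : ∀ f : ℕ → Bool, (∀ n : ℕ, (lab ((List.range n).map f)).isSome) →
      ∀ N : ℕ, ∃ n : ℕ, N ≤ n ∧ f n = true ∧
        (lab ((List.range n).map f)).map Prod.fst = some Rule.box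

/-- The sequent at the root of an ∞-proof. -/
def rootSeq (π : InfProof) : Sequent := ((π.lab []).map Prod.snd).getD (0, 0)

/-- `Proves π S` : the ∞-proof `π` is an ∞-proof of the sequent `S`. -/
def Proves (π : InfProof) (S : Sequent) : Prop := ∃ r : Rule, π.lab [] = some (r, S)

/-- An ∞-proof contains no application of the cut rule (i.e. it is a proof of Grz∞). -/
def NoCut (π : InfProof) : Prop := ∀ (a : List Bool) (r : Rule) (s : Sequent),
  π.lab a = some (r, s) → r ≠ Rule.cut

/-- Membership of an address in the main fragment: no proper passage through a
right premise of (□) strictly below it. -/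
def InMain (l : Lab) (a : List Bool) : Prop :=
  (l a).isSome ∧ ∀ (b c : List Bool), a = b ++ true :: c →
    (l b).map Prod.fst = some Rule.box → c = []

/-- The local height |π| : the length of the longest branch in the main fragment. -/
noncomputable def height (l : Lab) : ℕ := sSup {n : ℕ | ∃ a : List Bool, InMain l a ∧ a.length = n}

/-- The relations ∼ₙ on ∞-proofs (presented on labellings), defined inductively:
π ∼₀ τ always; a single-node proof is ∼ₙ-related to itself; proofs ending in the same
instance of (→L), (cut), (→R), (refl) are ∼ₙ-related when their immediate subproofs are;
proofs ending in the same instance of (□) are ∼ₙ₊₁-related when the left-premise subproofs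
are ∼ₙ₊₁-related and the right-premise subproofs are ∼ₙ-related. -/
inductive Sim : ℕ → Lab → Lab → Prop
  | zero (l m : Lab) : Sim 0 l m
  | leaf (n : ℕ) (l : Lab) : height l = 0 → Sim n l l
  | bin (n : ℕ) (l m : Lab) (r : Rule) (s : Sequent) :
      (r = Rule.impL ∨ r = Rule.cut) →
      l [] = some (r, s) → m [] = some (r, s) →
      (l [false]).map Prod.snd = (m [false]).map Prod.snd →
      (l [true]).map Prod.snd = (m [true]).map Prod.snd →
      Sim n (shift false l) (shift false m) → Sim n (shift true l) (shift true m) →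
      Sim n l m
  | un (n : ℕ) (l m : Lab) (r : Rule) (s : Sequent) :
      (r = Rule.impR ∨ r = Rule.refl) →
      l [] = some (r, s) → m [] = some (r, s) →
      (l [false]).map Prod.snd = (m [false]).map Prod.snd →
      Sim n (shift false l) (shift false m) →
      Sim n l m
  | box (n : ℕ) (l m : Lab) (s : Sequent) :
      l [] = some (Rule.box, s) → m [] = some (Rule.box, s) →
      (l [false]).map Prod.snd = (m [false]).map Prod.snd →
      (l [true]).map Prod.snd = (m [true]).map Prod.snd →
      Sim (n + 1) (shift false l) (shift false m) → Sim n (shift true l) (shift true m) →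
      Sim (n + 1) l m

/-- The sets 𝒫ₙ of ∞-proofs (presented on labellings), defined inductively:
𝒫₀ is everything; single-node proofs are in every 𝒫ₙ; (→L), (→R), (refl) preserve
membership in 𝒫ₙ; a proof ending in (□) with left-premise subproof in 𝒫ₙ₊₁ and
right-premise subproof in 𝒫ₙ is in 𝒫ₙ₊₁. -/
inductive MemP : ℕ → Lab → Prop
  | zero (l : Lab) : MemP 0 l
  | leaf (n : ℕ) (l : Lab) : height l = 0 → MemP n l
  | bin (n : ℕ) (l : Lab) (s : Sequent) :
      l [] = some (Rule.impL, s) →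
      MemP n (shift false l) → MemP n (shift true l) → MemP n l
  | un (n : ℕ) (l : Lab) (r : Rule) (s : Sequent) :
      (r = Rule.impR ∨ r = Rule.refl) →
      l [] = some (r, s) → MemP n (shift false l) → MemP n l
  | box (n : ℕ) (l : Lab) (s : Sequent) :
      l [] = some (Rule.box, s) →
      MemP (n + 1) (shift false l) → MemP n (shift true l) → MemP (n + 1) l

/- The metric d(π,τ) = 2^(−sup{n : π ∼ₙ τ}), with 2^(−∞) = 0. -/
open Classical in
noncomputable def pdist (π τ : InfProof) : ℝ :=
  if ∀ n : ℕ, Sim n π.lab τ.lab then 0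
  else (2 : ℝ) ^ (-((sSup {n : ℕ | Sim n π.lab τ.lab} : ℕ) : ℤ))

/-- A mapping on ∞-proofs is nonexpansive if it preserves all relations ∼ₙ. -/
def Nonexpansive (f : InfProof → InfProof) : Prop :=
  ∀ (n : ℕ) (π τ : InfProof), Sim n π.lab τ.lab → Sim n (f π).lab (f τ).lab

/-- A mapping is adequate if it is nonexpansive, maps 𝒫₁ into 𝒫₁,
and does not increase local height. -/
def Adequate (f : InfProof → InfProof) : Prop :=
  Nonexpansive f ∧ (∀ π : InfProof, MemP 1 π.lab → MemP 1 (f π).lab) ∧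
    ∀ π : InfProof, height (f π).lab ≤ height π.lab

/-- The set 𝒫₁ of ∞-proofs whose main fragment is cut-free, as a subtype. -/
abbrev P1 : Type := {π : InfProof // MemP 1 π.lab}

/-- An A-reducing mapping: a nonexpansive map ℛ : 𝒫₁ × 𝒫₁ → 𝒫₁ such that
ℛ(π′,π″) proves Γ ⇒ Δ whenever π′ proves Γ ⇒ Δ, A and π″ proves A, Γ ⇒ Δ. -/
def Reducing (A : Formula) (R : P1 → P1 → P1) : Prop :=
  (∀ (n : ℕ) (p₁ p₂ q₁ q₂ : P1), Sim n p₁.1.lab q₁.1.lab → Sim n p₂.1.lab q₂.1.lab →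
      Sim n (R p₁ p₂).1.lab (R q₁ q₂).1.lab) ∧
  ∀ (p₁ p₂ : P1) (Γ Δ : Multiset Formula),
    Proves p₁.1 (Γ, A ::ₘ Δ) → Proves p₂.1 (A ::ₘ Γ, Δ) → Proves (R p₁ p₂).1 (Γ, Δ)

/-- A mapping is root-preserving if it maps ∞-proofs to ∞-proofs of the same sequent. -/
def RootPres (f : InfProof → InfProof) : Prop :=
  ∀ (π : InfProof) (S : Sequent), Proves π S → Proves (f π) S

/-- The uniform distance on mappings of ∞-proofs. -/
noncomputable def udist (U V : InfProof → InfProof) : ℝ :=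
  ⨆ π : InfProof, pdist (U π) (V π)

/- The immediate subproof of `π` at child `i` (junk value `π` if there is none). -/
open Classical in
noncomputable def subtree (π : InfProof) (i : Bool) : InfProof :=
  if h : ∃ τ : InfProof, τ.lab = shift i π.lab then h.choose else π

/-- `IsFOp E F` : `F` is the operator ℱ (relative to the one-step cut-elimination map
`E` = ℰ*) defined by: on proofs with cut-free main fragment it commutes with the last
rule, applying `U` at right premises of (□) and fixing single-node proofs; on other
proofs it first applies `E`. -/
def IsFOp (E : InfProof → InfProof) (F : (InfProof → InfProof) → InfProof → InfProof) : Prop :=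
  ∀ (U : InfProof → InfProof) (π : InfProof),
    (MemP 1 π.lab → height π.lab = 0 → F U π = π) ∧
    (∀ (r : Rule) (s : Sequent), MemP 1 π.lab → π.lab [] = some (r, s) →
        r ≠ Rule.box → r ≠ Rule.cut → height π.lab ≠ 0 →
        (F U π).lab [] = some (r, s) ∧
        shift false (F U π).lab = (F U (subtree π false)).lab ∧
        (r = Rule.impL → shift true (F U π).lab = (F U (subtree π true)).lab)) ∧
    (∀ s : Sequent, MemP 1 π.lab → π.lab [] = some (Rule.box, s) →
        (F U π).lab [] = some (Rule.box, s) ∧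
        shift false (F U π).lab = (F U (subtree π false)).lab ∧
        shift true (F U π).lab = (U (subtree π true)).lab) ∧
    (¬ MemP 1 π.lab → F U π = F U (E π))

/-- Membership in 𝒩ₙ : a root-preserving nonexpansive map whose image lies in 𝒫ₙ. -/
def InN (n : ℕ) (U : InfProof → InfProof) : Prop :=
  Nonexpansive U ∧ RootPres U ∧ ∀ π : InfProof, MemP n (U π).lab

/-- The finitary sequent calculus Grz_Seq (with cut allowed iff the flag is `true`). -/
inductive GrzSeq : Bool → Sequent → Prop
  | ax (c : Bool) (Γ Δ : Multiset Formula) (A : Formula) :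
      GrzSeq c (A ::ₘ Γ, A ::ₘ Δ)
  | bot (c : Bool) (Γ Δ : Multiset Formula) :
      GrzSeq c (Formula.bot ::ₘ Γ, Δ)
  | impL (c : Bool) (Γ Δ : Multiset Formula) (A B : Formula) :
      GrzSeq c (B ::ₘ Γ, Δ) → GrzSeq c (Γ, A ::ₘ Δ) →
      GrzSeq c (Formula.imp A B ::ₘ Γ, Δ)
  | impR (c : Bool) (Γ Δ : Multiset Formula) (A B : Formula) :
      GrzSeq c (A ::ₘ Γ, B ::ₘ Δ) → GrzSeq c (Γ, Formula.imp A B ::ₘ Δ)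
  | refl (c : Bool) (Γ Δ : Multiset Formula) (B : Formula) :
      GrzSeq c (B ::ₘ Formula.box B ::ₘ Γ, Δ) → GrzSeq c (Formula.box B ::ₘ Γ, Δ)
  | grz (c : Bool) (Γ Δ : Multiset Formula) (A : Formula) (P : Multiset Formula) :
      GrzSeq c (Formula.box (Formula.imp A (Formula.box A)) ::ₘ boxed P, {A}) →
      GrzSeq c (Γ + boxed P, Formula.box A ::ₘ Δ)
  | cut (Γ Δ : Multiset Formula) (A : Formula) :
      GrzSeq true (Γ, A ::ₘ Δ) → GrzSeq true (A ::ₘ Γ, Δ) → GrzSeq true (Γ, Δ)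

namespace GrzAux

/-- Finite proof trees. -/
inductive FT : Type
  | leaf : Rule → Sequent → FT
  | un : Rule → Sequent → FT → FT
  | bin : Rule → Sequent → FT → FT → FT

namespace FT

def label : FT → Rule × Sequent
  | leaf r s => (r, s)
  | un r s _ => (r, s)
  | bin r s _ _ => (r, s)

def child : FT → Bool → Option FT
  | leaf _ _, _ => none
  | un _ _ t, false => some t
  | un _ _ _, true => none
  | bin _ _ t _, false => some t
  | bin _ _ _ u, true => some u

def size : FT → ℕ
  | leaf _ _ => 1
  | un _ _ t => t.size + 1
  | bin _ _ t u => t.size + u.size + 1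

def Ok : FT → Prop
  | leaf r s => Inst r s none none
  | un r s t => Inst r s (some t.label.2) none ∧ t.Ok
  | bin r s t u => Inst r s (some t.label.2) (some u.label.2) ∧ t.Ok ∧ u.Ok

def NC : FT → Prop
  | leaf r _ => r ≠ Rule.cut
  | un r _ t => r ≠ Rule.cut ∧ t.NC
  | bin r _ t u => r ≠ Rule.cut ∧ t.NC ∧ u.NC

lemma child_size {t u : FT} {i : Bool} (h : t.child i = some u) : u.size < t.size := by
  cases t <;> cases i <;> simp_all [child, size] <;> omega

lemma size_pos (t : FT) : 0 < t.size := by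
  cases t <;> simp [size]

lemma child_ok {t u : FT} {i : Bool} (h : t.child i = some u) (ho : t.Ok) : u.Ok := by
  cases t <;> cases i <;> simp_all [child, Ok]

lemma child_nc {t u : FT} {i : Bool} (h : t.child i = some u) (ho : t.NC) : u.NC := by
  cases t <;> cases i <;> simp_all [child, NC]

lemma ok_inst {t : FT} (ho : t.Ok) :
    Inst t.label.1 t.label.2 ((t.child false).map fun u => u.label.2)
      ((t.child true).map fun u => u.label.2) := by
  cases t <;> simp_all [child, Ok, label]

lemma nc_root {t : FT} (h : t.NC) : t.label.1 ≠ Rule.cut := by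
  cases t <;> simp_all [NC, label]

/-- Identity sequents have finite cut-free proofs. -/
theorem ident (C : Formula) : ∀ (Γ Δ : Multiset Formula),
    ∃ t : FT, t.Ok ∧ t.NC ∧ t.label.2 = (C ::ₘ Γ, C ::ₘ Δ) := by
  induction C with
  | bot =>
      intro Γ Δ
      exact ⟨leaf .axBot (Formula.bot ::ₘ Γ, Formula.bot ::ₘ Δ),
        Inst.axBot Γ (Formula.bot ::ₘ Δ), by simp [NC], rfl⟩
  | atom p =>
      intro Γ Δ
      exact ⟨leaf .ax (Formula.atom p ::ₘ Γ, Formula.atom p ::ₘ Δ),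
        Inst.ax Γ Δ p, by simp [NC], rfl⟩
  | imp D E ihD ihE =>
      intro Γ Δ
      obtain ⟨tE, hE1, hE2, hE3⟩ := ihE (D ::ₘ Γ) Δ
      obtain ⟨tD, hD1, hD2, hD3⟩ := ihD Γ (E ::ₘ Δ)
      refine ⟨un .impR (D.imp E ::ₘ Γ, D.imp E ::ₘ Δ)
        (bin .impL (D ::ₘ D.imp E ::ₘ Γ, E ::ₘ Δ) tE tD), ⟨?_, ⟨?_, hE1, hD1⟩⟩,
        ⟨by simp, by simp, hE2, hD2⟩, rfl⟩
      · exact Inst.impR (D.imp E ::ₘ Γ) Δ D E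
      · rw [hE3, hD3]
        have := Inst.impL (D ::ₘ Γ) (E ::ₘ Δ) D E
        rwa [Multiset.cons_swap] at this
  | box D ih =>
      intro Γ Δ
      obtain ⟨tL, hL1, hL2, hL3⟩ := ih (D.box ::ₘ Γ) Δ
      obtain ⟨tR, hR1, hR2, hR3⟩ := ih (D.box ::ₘ 0) 0
      have hb : boxed {D} = D.box ::ₘ 0 := by simp [boxed]
      refine ⟨bin .box (D.box ::ₘ Γ, D.box ::ₘ Δ)
        (un .refl (D.box ::ₘ Γ, D ::ₘ Δ) tL)
        (un .refl (D.box ::ₘ 0, D ::ₘ 0) tR),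
        ⟨?_, ⟨?_, hL1⟩, ⟨?_, hR1⟩⟩,
        ⟨by simp, ⟨by simp, hL2⟩, ⟨by simp, hR2⟩⟩, rfl⟩
      · have := Inst.box Γ Δ D {D}
        rw [hb] at this
        simp only [label]
        have hadd : Γ + (D.box ::ₘ 0) = D.box ::ₘ Γ := by
          rw [add_comm]; simp
        rwa [hadd] at this
      · rw [hL3]; exact Inst.refl Γ (D ::ₘ Δ) D
      · rw [hR3]; exact Inst.refl 0 (D ::ₘ 0) D

end FT

/-- A machine generating a regular ∞-proof. -/
structure Mach : Type 1 where
  St : Type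
  label : St → Rule × Sequent
  child : St → Bool → Option St
  ok : ∀ t, Inst (label t).1 (label t).2 ((child t false).map fun u => (label u).2)
      ((child t true).map fun u => (label u).2)
  nocut : ∀ t, (label t).1 ≠ Rule.cut
  rank : St → ℕ
  dec : ∀ t i u, child t i = some u → ((label t).1 = Rule.box ∧ i = true) ∨ rank u < rank t

namespace Mach

def follow (M : Mach) : List Bool → M.St → Option M.St
  | [], t => some t
  | i :: a, t => match M.child t i with
      | none => none
      | some u => follow M a u

variable (M : Mach)

lemma follow_append (i : Bool) : ∀ (a : List Bool) (t : M.St),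
    M.follow (a ++ [i]) t = (M.follow a t).bind fun u => M.child u i := by
  intro a
  induction a with
  | nil => intro t; cases hc : M.child t i <;> simp [follow, hc]
  | cons j b ih =>
      intro t
      simp only [List.cons_append, follow]
      cases M.child t j <;> simp [ih]

/-- The ∞-proof generated by `M` from start state `t0`. -/
noncomputable def toProof (t0 : M.St) : InfProof where
  lab := fun a => (M.follow a t0).map M.label
  root_some := by simp [follow]
  nojunk := by
    intro a i h
    rw [follow_append]
    rcases hf : M.follow a t0 with _ | u
    · rfl
    · rw [hf] at h; exact absurd h (by simp)
  step := by
    intro a r s h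
    rcases hf : M.follow a t0 with _ | u
    · rw [hf] at h; exact absurd h (by simp)
    · rw [hf] at h
      have hl : M.label u = (r, s) := Option.some.inj h
      have := M.ok u
      rw [hl] at this
      have e1 : ((M.follow (a ++ [false]) t0).map M.label).map Prod.snd
          = (M.child u false).map fun v => (M.label v).2 := by
        rw [follow_append, hf, Option.map_map]
        rfl
      have e2 : ((M.follow (a ++ [true]) t0).map M.label).map Prod.snd
          = (M.child u true).map fun v => (M.label v).2 := by
        rw [follow_append, hf, Option.map_map]
        rfl
      rw [e1, e2]
      exact this
  branch := by
    intro f h N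
    by_contra hc
    push_neg at hc
    have hu : ∀ n, ∃ v, M.follow ((List.range n).map f) t0 = some v := by
      intro n
      have := h n
      rcases hf : M.follow ((List.range n).map f) t0 with _ | v
      · rw [hf] at this; simp at this
      · exact ⟨v, rfl⟩
    choose u hu using hu
    have hstep : ∀ n, M.child (u n) (f n) = some (u (n + 1)) := by
      intro n
      have : (List.range (n + 1)).map f = (List.range n).map f ++ [f n] := by
        rw [List.range_succ, List.map_append]; rfl
      have h2 := hu (n + 1)
      rw [this, follow_append, hu n] at h2
      simpa using h2
    have hdec : ∀ n, N ≤ n → M.rank (u (n + 1)) < M.rank (u n) := by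
      intro n hn
      rcases M.dec (u n) (f n) (u (n + 1)) (hstep n) with ⟨hb, ht⟩ | hlt
      · exfalso
        exact hc n hn ht (by rw [hu n]; simp [hb])
      · exact hlt
    have key : ∀ k, M.rank (u (N + k)) + k ≤ M.rank (u N) := by
      intro k
      induction k with
      | zero => simp
      | succ m ih =>
          have h2 := hdec (N + m) (Nat.le_add_right _ _)
          have h3 : N + (m + 1) = (N + m) + 1 := by omega
          rw [h3]
          omega
    have := key (M.rank (u N) + 1)
    omega

lemma toProof_nocut (t0 : M.St) : NoCut (M.toProof t0) := by
  intro a r s h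
  simp only [toProof] at h
  rcases hf : M.follow a t0 with _ | u <;> rw [hf] at h
  · exact absurd h (by simp)
  · have hl : M.label u = (r, s) := Option.some.inj h
    have := M.nocut u
    rw [hl] at this
    exact this

lemma toProof_proves (t0 : M.St) : Proves (M.toProof t0) (M.label t0).2 := by
  refine ⟨(M.label t0).1, ?_⟩
  simp [toProof, follow]

end Mach

end GrzAux

namespace GrzAux

abbrev OkFT : Type := {t : FT // t.Ok ∧ t.NC}

def childD (p : OkFT) (i : Bool) : Option OkFT :=
  Option.pmap (fun u h => ⟨u, FT.child_ok h p.2.1, FT.child_nc h p.2.2⟩)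
    (p.1.child i) (fun _ ha => ha)

lemma childD_seq (p : OkFT) (i : Bool) :
    ((childD p i).map fun q => q.1.label.2) = (p.1.child i).map fun u => u.label.2 := by
  cases hc : p.1.child i <;> simp [childD, hc]

lemma childD_size {p q : OkFT} {i : Bool} (h : childD p i = some q) :
    q.1.size < p.1.size := by
  cases hc : p.1.child i <;> simp [childD, hc] at h
  exact h ▸ FT.child_size hc

section Main

variable (A : Formula)

def BB : Formula := Formula.imp A (Formula.box A)
def G : Formula := Formula.imp (Formula.box (BB A)) A
def bG : Formula := Formula.box (G A)

noncomputable def id1 : OkFT :=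
  ⟨(FT.ident A (bG A ::ₘ 0) 0).choose, (FT.ident A (bG A ::ₘ 0) 0).choose_spec.1,
    (FT.ident A (bG A ::ₘ 0) 0).choose_spec.2.1⟩

lemma id1_seq : (id1 A).1.label.2 = (A ::ₘ bG A ::ₘ 0, A ::ₘ 0) :=
  (FT.ident A (bG A ::ₘ 0) 0).choose_spec.2.2

noncomputable def id2 : OkFT :=
  ⟨(FT.ident A (bG A ::ₘ 0) (A ::ₘ 0)).choose,
    (FT.ident A (bG A ::ₘ 0) (A ::ₘ 0)).choose_spec.1,
    (FT.ident A (bG A ::ₘ 0) (A ::ₘ 0)).choose_spec.2.1⟩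

lemma id2_seq : (id2 A).1.label.2 = (A ::ₘ bG A ::ₘ 0, A ::ₘ A ::ₘ 0) :=
  (FT.ident A (bG A ::ₘ 0) (A ::ₘ 0)).choose_spec.2.2

def seqs : ℕ → Rule × Sequent
  | 1 => (.impL, (G A ::ₘ bG A ::ₘ 0, A ::ₘ 0))
  | 2 => (.box, (bG A ::ₘ 0, Formula.box (BB A) ::ₘ A ::ₘ 0))
  | 3 => (.impR, (bG A ::ₘ 0, BB A ::ₘ A ::ₘ 0))
  | 4 => (.box, (A ::ₘ bG A ::ₘ 0, Formula.box A ::ₘ A ::ₘ 0))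
  | 5 => (.impR, (bG A ::ₘ 0, BB A ::ₘ 0))
  | 6 => (.box, (A ::ₘ bG A ::ₘ 0, Formula.box A ::ₘ 0))
  | _ => (.refl, (bG A ::ₘ 0, A ::ₘ 0))

noncomputable def chl : (ℕ ⊕ OkFT) → Bool → Option (ℕ ⊕ OkFT)
  | .inl 1, false => some (.inr (id1 A))
  | .inl 1, true => some (.inl 2)
  | .inl 2, false => some (.inl 3)
  | .inl 2, true => some (.inl 5)
  | .inl 3, false => some (.inl 4)
  | .inl 3, true => none
  | .inl 4, false => some (.inr (id2 A))
  | .inl 4, true => some (.inl 0)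
  | .inl 5, false => some (.inl 6)
  | .inl 5, true => none
  | .inl 6, false => some (.inr (id1 A))
  | .inl 6, true => some (.inl 0)
  | .inl _, false => some (.inl 1)
  | .inl _, true => none
  | .inr p, i => (childD p i).map .inr

noncomputable def Mx : ℕ := (id1 A).1.size + (id2 A).1.size

noncomputable def rk : (ℕ ⊕ OkFT) → ℕ
  | .inl 0 => Mx A + 8
  | .inl 1 => Mx A + 7
  | .inl 2 => Mx A + 6
  | .inl 3 => Mx A + 5
  | .inl 4 => Mx A + 4
  | .inl 5 => Mx A + 3
  | .inl 6 => Mx A + 2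
  | .inl _ => Mx A + 9
  | .inr p => p.1.size

lemma hboxed : boxed {G A} = bG A ::ₘ 0 := by simp [boxed, bG]

noncomputable def mach : Mach where
  St := ℕ ⊕ OkFT
  label := fun t => match t with
    | .inl k => seqs A k
    | .inr p => p.1.label
  child := chl A
  ok := by
    rintro (k | p)
    · rcases k with _ | _ | _ | _ | _ | _ | _ | k
      · -- state 0
        show Inst .refl (bG A ::ₘ 0, A ::ₘ 0) (some (G A ::ₘ bG A ::ₘ 0, A ::ₘ 0)) none
        exact Inst.refl 0 (A ::ₘ 0) (G A)
      · -- state 1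
        show Inst .impL (G A ::ₘ bG A ::ₘ 0, A ::ₘ 0) (some ((id1 A).1.label.2))
          (some (bG A ::ₘ 0, Formula.box (BB A) ::ₘ A ::ₘ 0))
        rw [id1_seq]
        exact Inst.impL (bG A ::ₘ 0) (A ::ₘ 0) (Formula.box (BB A)) A
      · -- state 2
        show Inst .box (bG A ::ₘ 0, Formula.box (BB A) ::ₘ A ::ₘ 0)
          (some (bG A ::ₘ 0, BB A ::ₘ A ::ₘ 0)) (some (bG A ::ₘ 0, BB A ::ₘ 0))
        have h := Inst.box 0 (A ::ₘ 0) (BB A) {G A}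
        rw [hboxed] at h
        simpa using h
      · -- state 3
        show Inst .impR (bG A ::ₘ 0, BB A ::ₘ A ::ₘ 0)
          (some (A ::ₘ bG A ::ₘ 0, Formula.box A ::ₘ A ::ₘ 0)) none
        exact Inst.impR (bG A ::ₘ 0) (A ::ₘ 0) A (Formula.box A)
      · -- state 4
        show Inst .box (A ::ₘ bG A ::ₘ 0, Formula.box A ::ₘ A ::ₘ 0)
          (some ((id2 A).1.label.2)) (some (bG A ::ₘ 0, A ::ₘ 0))
        rw [id2_seq]
        have h := Inst.box (A ::ₘ 0) (A ::ₘ 0) A {G A}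
        rw [hboxed] at h
        simpa using h
      · -- state 5
        show Inst .impR (bG A ::ₘ 0, BB A ::ₘ 0)
          (some (A ::ₘ bG A ::ₘ 0, Formula.box A ::ₘ 0)) none
        exact Inst.impR (bG A ::ₘ 0) 0 A (Formula.box A)
      · -- state 6
        show Inst .box (A ::ₘ bG A ::ₘ 0, Formula.box A ::ₘ 0)
          (some ((id1 A).1.label.2)) (some (bG A ::ₘ 0, A ::ₘ 0))
        rw [id1_seq]
        have h := Inst.box (A ::ₘ 0) 0 A {G A}
        rw [hboxed] at h
        simpa using h
      · -- states ≥ 7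
        show Inst .refl (bG A ::ₘ 0, A ::ₘ 0) (some (G A ::ₘ bG A ::ₘ 0, A ::ₘ 0)) none
        exact Inst.refl 0 (A ::ₘ 0) (G A)
    · -- FT states
      show Inst p.1.label.1 p.1.label.2
        (((childD p false).map Sum.inr).map fun u =>
          (match u with | .inl k => seqs A k | .inr q => q.1.label).2)
        (((childD p true).map Sum.inr).map fun u =>
          (match u with | .inl k => seqs A k | .inr q => q.1.label).2)
      rw [Option.map_map, Option.map_map]
      have e : ∀ i : Bool, ((childD p i).map
          ((fun u => (match u with | .inl k => seqs A k | .inr q => q.1.label).2) ∘ Sum.inr))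
          = (p.1.child i).map fun u => u.label.2 := by
        intro i; rw [← childD_seq]; rfl
      rw [e, e]
      exact FT.ok_inst p.2.1
  nocut := by
    rintro (k | p)
    · rcases k with _ | _ | _ | _ | _ | _ | _ | k <;> simp [seqs]
    · exact FT.nc_root p.2.2
  rank := rk A
  dec := by
    rintro (k | p) i u h
    · rcases k with _ | _ | _ | _ | _ | _ | _ | k <;> cases i <;>
        simp only [chl] at h <;>
        first
        | exact (Option.some_ne_none u h.symm).elim
        | exact Or.inl ⟨rfl, rfl⟩
        | (injection h with h
           subst h
           right
           have s1 := FT.size_pos (id1 A).1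
           have s2 := FT.size_pos (id2 A).1
           simp only [rk, Mx]
           omega)
    · right
      simp only [chl] at h
      rcases Option.map_eq_some_iff.mp h with ⟨q, hq, rfl⟩
      show q.1.size < p.1.size
      exact childD_size hq

lemma mach_root : ((mach A).label (Sum.inl 0)).2 = (bG A ::ₘ 0, A ::ₘ 0) := rfl

end Main

end GrzAux

/-- □(□(A → □A) → A) ⇒ A is provable in the cut-free calculus Grz∞. -/
theorem grz_axiom_provable (A : Formula) :
    ∃ π : InfProof, NoCut π ∧
      Proves π ({Formula.box (Formula.imp (Formula.box (Formula.imp A (Formula.box A))) A)},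
        {A}) := by
  refine ⟨(GrzAux.mach A).toProof (Sum.inl 0), (GrzAux.mach A).toProof_nocut _, ?_⟩
  have h := (GrzAux.mach A).toProof_proves (Sum.inl 0)
  rw [GrzAux.mach_root] at h
  have e : ((GrzAux.bG A ::ₘ 0, A ::ₘ 0) : Sequent)
      = ({Formula.box (Formula.imp (Formula.box (Formula.imp A (Formula.box A))) A)}, {A}) := by
    simp [GrzAux.bG, GrzAux.G, GrzAux.BB]
  rwa [e] at h
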